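/- arXiv:1806.11029 — 5 statements merged into one kernel-verified Lean document; each statement's English description precedes it below -/
import Mathlib

section
/- Let μ be a signed measure on ℝ² with density f_μ satisfying |f_μ(x)| ≤ C_μ exp(−c_μ(|x₁| + |x₂|)) for some constants C_μ, c_μ > 0 and all x ∈ ℝ². Then there exists a constant C > 0 such that for all u ∈ (0,∞)², ∫_{ℝ²} μ(B(x,u))² dx ≤ C · min(u₁, u₁²) · min(u₂, u₂²). In particular, for any γ₁, γ₂ ∈ (1,2), μ belongs to 𝓜^{γ₁,γ₂} (Proposition 3.6 with α₁ = α₂ = 2). -/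
open MeasureTheory Filter Set Topology

/-- The axis-parallel rectangle (box) in `ℝ²` with centre `x` and edge lengths `u`. -/
def box (x u : ℝ × ℝ) : Set (ℝ × ℝ) :=
  Icc (x.1 - u.1 / 2) (x.1 + u.1 / 2) ×ˢ Icc (x.2 - u.2 / 2) (x.2 + u.2 / 2)

/-- The open positive quadrant `(0,∞)²`. -/
def posQuadrant : Set (ℝ × ℝ) := Ioi 0 ×ˢ Ioi 0

namespace ExpDecayAux

noncomputable def E (c t : ℝ) : ℝ := Real.exp (-c * |t|)

lemma E_cont (c : ℝ) : Continuous (E c) :=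
  Real.continuous_exp.comp (continuous_const.mul continuous_abs)

lemma E_nonneg (c t : ℝ) : 0 ≤ E c t := (Real.exp_pos _).le

lemma E_le_one {c : ℝ} (hc : 0 < c) (t : ℝ) : E c t ≤ 1 := by
  unfold E
  rw [Real.exp_le_one_iff]
  have := abs_nonneg t
  nlinarith

lemma E_integrable {c : ℝ} (hc : 0 < c) : Integrable (E c) := by
  have h1 : IntegrableOn (E c) (Ioi (0:ℝ)) := by
    refine (exp_neg_integrableOn_Ioi 0 hc).congr_fun ?_ measurableSet_Ioi
    intro t ht
    rw [mem_Ioi] at ht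
    simp [E, abs_of_pos ht]
  have h2 : IntegrableOn (E c) (Iio (0:ℝ)) := by
    have h3 : Integrable ((Ioi (0:ℝ)).indicator (E c)) := by
      rwa [integrable_indicator_iff measurableSet_Ioi]
    have h4 := h3.comp_neg
    have heq : (fun t => (Ioi (0:ℝ)).indicator (E c) (-t)) = (Iio (0:ℝ)).indicator (E c) := by
      ext t
      by_cases ht : t < 0 <;>
        simp [Set.indicator_apply, mem_Ioi, mem_Iio, neg_pos, ht, E, abs_neg]
    rw [heq] at h4
    rwa [← integrable_indicator_iff measurableSet_Iio]
  have := h2.union (Iff.mpr integrableOn_Ici_iff_integrableOn_Ioi h1)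
  rwa [Iio_union_Ici, integrableOn_univ] at this

lemma exp_neg_mul_integral {c : ℝ} (hc : 0 < c) :
    (∫ x in Ioi (0:ℝ), Real.exp (-(c * x))) = 1 / c := by
  have h := integral_comp_mul_left_Ioi (fun y => Real.exp (-y)) 0 hc
  simp only [mul_zero] at h
  rw [h, integral_exp_neg_Ioi]
  simp [one_div]

lemma E_integral {c : ℝ} (hc : 0 < c) : (∫ t, E c t) = 2 / c := by
  have h := integral_add_compl (s := Iic (0:ℝ)) measurableSet_Iic (E_integrable (c := c) hc)
  rw [compl_Iic] at h
  have h1 : (∫ t in Ioi (0:ℝ), E c t) = 1 / c := by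
    rw [setIntegral_congr_fun measurableSet_Ioi (g := fun t => Real.exp (-(c * t)))]
    · exact exp_neg_mul_integral hc
    · intro t ht
      rw [mem_Ioi] at ht
      simp [E, abs_of_pos ht]
  have h2 : (∫ t in Iic (0:ℝ), E c t) = 1 / c := by
    rw [setIntegral_congr_fun measurableSet_Iic (g := fun t => Real.exp (c * t))]
    · have h3 := integral_comp_neg_Iic (0:ℝ) (fun x => Real.exp (-(c * x)))
      rw [neg_zero] at h3
      simp only [mul_neg, neg_neg] at h3
      rw [h3]
      exact exp_neg_mul_integral hc
    · intro t ht
      rw [mem_Iic] at ht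
      have : |t| = -t := abs_of_nonpos ht
      simp only [E, this]
      ring_nf
  rw [← h, h1, h2]
  ring


noncomputable def G (c v x : ℝ) : ℝ := ∫ t in Icc (x - v/2) (x + v/2), E c t

lemma G_eq {c v : ℝ} (hc : 0 < c) (hv : 0 ≤ v) (x : ℝ) :
    G c v x = (∫ t in (0:ℝ)..(x + v/2), E c t) - ∫ t in (0:ℝ)..(x - v/2), E c t := by
  have hle : x - v/2 ≤ x + v/2 := by linarith
  rw [intervalIntegral.integral_interval_sub_left
      ((E_integrable hc).intervalIntegrable) ((E_integrable hc).intervalIntegrable)]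
  rw [G, integral_Icc_eq_integral_Ioc, intervalIntegral.integral_of_le hle]

lemma G_cont {c v : ℝ} (hc : 0 < c) (hv : 0 ≤ v) : Continuous (G c v) := by
  have hprim : Continuous fun b => ∫ t in (0:ℝ)..b, E c t :=
    (E_integrable hc).continuous_primitive 0
  have : G c v = fun x =>
      (∫ t in (0:ℝ)..(x + v/2), E c t) - ∫ t in (0:ℝ)..(x - v/2), E c t := by
    funext x; exact G_eq hc hv x
  rw [this]
  exact (hprim.comp (continuous_id.add continuous_const)).sub
    (hprim.comp (continuous_id.sub continuous_const))

lemma G_nonneg (c v x : ℝ) : 0 ≤ G c v x :=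
  setIntegral_nonneg measurableSet_Icc fun t _ => E_nonneg c t

lemma G_le {c v : ℝ} (hc : 0 < c) (hv : 0 < v) (x : ℝ) : G c v x ≤ min v (2/c) := by
  refine le_min ?_ ?_
  · have h1 : G c v x ≤ ∫ _t in Icc (x - v/2) (x + v/2), (1:ℝ) := by
      refine setIntegral_mono_on (E_integrable hc).integrableOn
        (integrableOn_const measure_Icc_lt_top.ne) measurableSet_Icc
        fun t _ => E_le_one hc t
    rw [setIntegral_const, Real.volume_real_Icc, smul_eq_mul, mul_one,
      show x + v/2 - (x - v/2) = v by ring, max_eq_left hv.le] at h1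
    exact h1
  · have h2 : G c v x ≤ ∫ t, E c t :=
      setIntegral_le_integral (E_integrable hc) (ae_of_all _ fun t => E_nonneg c t)
    rwa [E_integral hc] at h2

lemma G_lintegral_le {c v : ℝ} (hc : 0 < c) (hv : 0 < v) :
    (∫⁻ x, ENNReal.ofReal (G c v x)) ≤ ENNReal.ofReal v * ENNReal.ofReal (2/c) := by
  have key : ∀ x : ℝ, ENNReal.ofReal (G c v x)
      = ∫⁻ t, (Icc (x - v/2) (x + v/2)).indicator (fun s => ENNReal.ofReal (E c s)) t := by
    intro x
    rw [G, ofReal_integral_eq_lintegral_ofReal (E_integrable hc).integrableOn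
        (ae_of_all _ fun t => E_nonneg c t)]
    rw [lintegral_indicator measurableSet_Icc]
  simp only [key]
  have hmeas : Measurable (fun p : ℝ × ℝ =>
      (Icc (p.1 - v/2) (p.1 + v/2)).indicator (fun s => ENNReal.ofReal (E c s)) p.2) := by
    have heq : (fun p : ℝ × ℝ =>
        (Icc (p.1 - v/2) (p.1 + v/2)).indicator (fun s => ENNReal.ofReal (E c s)) p.2)
        = fun p : ℝ × ℝ => if p.1 - v/2 ≤ p.2 ∧ p.2 ≤ p.1 + v/2
            then ENNReal.ofReal (E c p.2) else 0 := by
      funext p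
      rw [Set.indicator_apply]
      congr 1
    rw [heq]
    refine Measurable.ite ?_ (ENNReal.measurable_ofReal.comp ((E_cont c).measurable.comp
      measurable_snd)) measurable_const
    exact MeasurableSet.inter
      (measurableSet_le (measurable_fst.sub measurable_const) measurable_snd)
      (measurableSet_le measurable_snd (measurable_fst.add measurable_const))
  rw [lintegral_lintegral_swap hmeas.aemeasurable]
  have inner : ∀ t : ℝ, (∫⁻ x, (Icc (x - v/2) (x + v/2)).indicator
      (fun s => ENNReal.ofReal (E c s)) t) = ENNReal.ofReal (E c t) * ENNReal.ofReal v := by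
    intro t
    have hswap : ∀ x : ℝ, (Icc (x - v/2) (x + v/2)).indicator
        (fun s => ENNReal.ofReal (E c s)) t
        = (Icc (t - v/2) (t + v/2)).indicator (fun _ => ENNReal.ofReal (E c t)) x := by
      intro x
      rw [Set.indicator_apply, Set.indicator_apply]
      have : t ∈ Icc (x - v/2) (x + v/2) ↔ x ∈ Icc (t - v/2) (t + v/2) := by
        simp only [mem_Icc]
        constructor <;> (intro h; constructor <;> linarith [h.1, h.2])
      simp only [this]
    simp only [hswap]
    rw [lintegral_indicator_const measurableSet_Icc, Real.volume_Icc,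
      show t + v/2 - (t - v/2) = v by ring]
  simp only [inner]
  rw [lintegral_mul_const _ ((E_cont c).measurable.ennreal_ofReal)]
  rw [← ofReal_integral_eq_lintegral_ofReal (E_integrable hc)
      (ae_of_all _ fun t => E_nonneg c t), E_integral hc]
  rw [mul_comm]

lemma G_integrable {c v : ℝ} (hc : 0 < c) (hv : 0 < v) : Integrable (G c v) := by
  refine ⟨(G_cont hc hv.le).aestronglyMeasurable, ?_⟩
  rw [hasFiniteIntegral_iff_ofReal (ae_of_all _ fun x => G_nonneg c v x)]
  exact lt_of_le_of_lt (G_lintegral_le hc hv)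
    (ENNReal.mul_lt_top ENNReal.ofReal_lt_top ENNReal.ofReal_lt_top)

lemma G_integral_le {c v : ℝ} (hc : 0 < c) (hv : 0 < v) : (∫ x, G c v x) ≤ v * (2/c) := by
  rw [integral_eq_lintegral_of_nonneg_ae (ae_of_all _ fun x => G_nonneg c v x)
      (G_cont hc hv.le).aestronglyMeasurable]
  refine ENNReal.toReal_le_of_le_ofReal (by positivity) ?_
  calc (∫⁻ x, ENNReal.ofReal (G c v x)) ≤ ENNReal.ofReal v * ENNReal.ofReal (2/c) :=
        G_lintegral_le hc hv
    _ = ENNReal.ofReal (v * (2/c)) := (ENNReal.ofReal_mul hv.le).symm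

lemma Gsq_integrable {c v : ℝ} (hc : 0 < c) (hv : 0 < v) :
    Integrable (fun x => (G c v x)^2) := by
  have hb : ∀ x : ℝ, ‖(G c v x)^2‖ ≤ min v (2/c) * G c v x := by
    intro x
    rw [Real.norm_eq_abs, abs_of_nonneg (sq_nonneg _), sq]
    exact mul_le_mul_of_nonneg_right (G_le hc hv x) (G_nonneg c v x)
  exact ((G_integrable hc hv).const_mul _).mono'
    (((G_cont hc hv.le).pow 2).aestronglyMeasurable) (ae_of_all _ hb)

lemma Gsq_integral_le {c v : ℝ} (hc : 0 < c) (hv : 0 < v) :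
    (∫ x, (G c v x)^2) ≤ (2/c) * max 1 (2/c) * min v (v^2) := by
  have h2c : (0:ℝ) < 2/c := by positivity
  have hminnn : (0:ℝ) ≤ min v (2/c) := le_min hv.le h2c.le
  have h1 : (∫ x, (G c v x)^2) ≤ ∫ x, min v (2/c) * G c v x := by
    refine integral_mono (Gsq_integrable hc hv) ((G_integrable hc hv).const_mul _) fun x => ?_
    rw [sq]
    exact mul_le_mul_of_nonneg_right (G_le hc hv x) (G_nonneg c v x)
  rw [integral_const_mul] at h1
  have h2 : min v (2/c) * (∫ x, G c v x) ≤ min v (2/c) * (v * (2/c)) :=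
    mul_le_mul_of_nonneg_left (G_integral_le hc hv) hminnn
  have harith : min v (2/c) * (v * (2/c)) ≤ (2/c) * max 1 (2/c) * min v (v^2) := by
    rcases le_total v 1 with h | h
    · have hmin : min v (v^2) = v^2 := min_eq_right (by nlinarith)
      rw [hmin]
      have hle : min v (2/c) ≤ v := min_le_left _ _
      have hmax : (1:ℝ) ≤ max 1 (2/c) := le_max_left _ _
      calc min v (2/c) * (v * (2/c)) ≤ v * (v * (2/c)) :=
            mul_le_mul_of_nonneg_right hle (by positivity)
        _ = (2/c) * 1 * v^2 := by ring
        _ ≤ (2/c) * max 1 (2/c) * v^2 :=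
            mul_le_mul_of_nonneg_right (mul_le_mul_of_nonneg_left hmax h2c.le) (sq_nonneg v)
    · have hmin : min v (v^2) = v := min_eq_left (by nlinarith)
      rw [hmin]
      have hle : min v (2/c) ≤ 2/c := min_le_right _ _
      have hmax : 2/c ≤ max 1 (2/c) := le_max_right _ _
      calc min v (2/c) * (v * (2/c)) ≤ (2/c) * (v * (2/c)) :=
            mul_le_mul_of_nonneg_right hle (by positivity)
        _ = (2/c) * (2/c) * v := by ring
        _ ≤ (2/c) * max 1 (2/c) * v :=
            mul_le_mul_of_nonneg_right (mul_le_mul_of_nonneg_left hmax h2c.le) hv.le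
  linarith

end ExpDecayAux

open ExpDecayAux in
/-- Proposition 3.6: a signed measure with an exponentially decaying density satisfies
the `𝓜^{γ₁,γ₂}` bound with exponents `α₁ = α₂ = 2`. -/
theorem exp_decay_density_in_M_gamma
    (μ : MeasureTheory.SignedMeasure (ℝ × ℝ)) (fμ : ℝ × ℝ → ℝ) (hfμm : Measurable fμ)
    (hdens : ∀ s : Set (ℝ × ℝ), MeasurableSet s → μ s = ∫ y in s, fμ y)
    (Cμ cμ : ℝ) (hCμ : 0 < Cμ) (hcμ : 0 < cμ)
    (hdecay : ∀ x : ℝ × ℝ, |fμ x| ≤ Cμ * Real.exp (-cμ * (|x.1| + |x.2|))) :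
    ∃ C > (0 : ℝ), ∀ u ∈ posQuadrant,
      (∫ x : ℝ × ℝ, (μ (box x u)) ^ 2) ≤ C * min u.1 (u.1 ^ 2) * min u.2 (u.2 ^ 2) := by
  set K : ℝ := (2/cμ) * max 1 (2/cμ) with hK
  have hKpos : 0 < K := by
    have : (0:ℝ) < 2/cμ := by positivity
    have h1 : (1:ℝ) ≤ max 1 (2/cμ) := le_max_left _ _
    nlinarith
  refine ⟨Cμ^2 * K^2, by positivity, ?_⟩
  rintro u hu
  have hu1 : 0 < u.1 := hu.1
  have hu2 : 0 < u.2 := hu.2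
  have hbox : ∀ x : ℝ × ℝ, MeasurableSet (box x u) :=
    fun x => measurableSet_Icc.prod measurableSet_Icc
  -- the dominating product function
  set D : ℝ × ℝ → ℝ := fun y => Cμ * (E cμ y.1 * E cμ y.2) with hD
  have hDcont : Continuous D :=
    continuous_const.mul (((E_cont cμ).comp continuous_fst).mul
      ((E_cont cμ).comp continuous_snd))
  have hDom : ∀ y : ℝ × ℝ, |fμ y| ≤ D y := by
    intro y
    refine (hdecay y).trans (le_of_eq ?_)
    rw [hD]
    simp only [E, ← Real.exp_add]
    congr 1
    ring
  have hDint : ∀ x : ℝ × ℝ, IntegrableOn D (box x u) := fun x =>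
    hDcont.continuousOn.integrableOn_compact (isCompact_Icc.prod isCompact_Icc)
  have hfint : ∀ x : ℝ × ℝ, IntegrableOn fμ (box x u) := by
    intro x
    refine (hDint x).mono' (hfμm.aestronglyMeasurable.restrict) ?_
    exact ae_of_all _ fun y => by rw [Real.norm_eq_abs]; exact hDom y
  have hDval : ∀ x : ℝ × ℝ, (∫ y in box x u, D y)
      = Cμ * (G cμ u.1 x.1 * G cμ u.2 x.2) := by
    intro x
    rw [hD]
    rw [integral_const_mul]
    congr 1
    rw [show box x u = Icc (x.1 - u.1 / 2) (x.1 + u.1 / 2) ×ˢ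
        Icc (x.2 - u.2 / 2) (x.2 + u.2 / 2) from rfl]
    rw [Measure.volume_eq_prod ℝ ℝ, setIntegral_prod_mul]
    rfl
  have hub : ∀ x : ℝ × ℝ, |μ (box x u)| ≤ Cμ * (G cμ u.1 x.1 * G cμ u.2 x.2) := by
    intro x
    rw [hdens _ (hbox x)]
    calc |∫ y in box x u, fμ y| ≤ ∫ y in box x u, |fμ y| := by
          simpa [Real.norm_eq_abs] using
            norm_integral_le_integral_norm (μ := volume.restrict (box x u)) fμ
      _ ≤ ∫ y in box x u, D y :=
          setIntegral_mono_on (hfint x).abs (hDint x) (hbox x) fun y _ => hDom y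
      _ = Cμ * (G cμ u.1 x.1 * G cμ u.2 x.2) := hDval x
  -- the dominating integrable function for the squared integrand
  have hψint : Integrable (fun x : ℝ × ℝ => Cμ^2 * ((G cμ u.1 x.1)^2 * (G cμ u.2 x.2)^2)) := by
    rw [Measure.volume_eq_prod ℝ ℝ]
    exact ((Gsq_integrable hcμ hu1).mul_prod (Gsq_integrable hcμ hu2)).const_mul _
  have hmono : (∫ x : ℝ × ℝ, (μ (box x u))^2)
      ≤ ∫ x : ℝ × ℝ, Cμ^2 * ((G cμ u.1 x.1)^2 * (G cμ u.2 x.2)^2) := by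
    refine integral_mono_of_nonneg (ae_of_all _ fun x => sq_nonneg _) hψint
      (ae_of_all _ fun x => ?_)
    calc (μ (box x u))^2 = |μ (box x u)|^2 := (sq_abs _).symm
      _ ≤ (Cμ * (G cμ u.1 x.1 * G cμ u.2 x.2))^2 :=
          pow_le_pow_left₀ (abs_nonneg _) (hub x) 2
      _ = Cμ^2 * ((G cμ u.1 x.1)^2 * (G cμ u.2 x.2)^2) := by ring
  have hval : (∫ x : ℝ × ℝ, Cμ^2 * ((G cμ u.1 x.1)^2 * (G cμ u.2 x.2)^2))
      = Cμ^2 * ((∫ x, (G cμ u.1 x)^2) * ∫ x, (G cμ u.2 x)^2) := by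
    rw [integral_const_mul, Measure.volume_eq_prod ℝ ℝ,
      integral_prod_mul (fun x => (G cμ u.1 x)^2) (fun x => (G cμ u.2 x)^2)]
  have hg1 : (∫ x, (G cμ u.1 x)^2) ≤ K * min u.1 (u.1^2) := Gsq_integral_le hcμ hu1
  have hg2 : (∫ x, (G cμ u.2 x)^2) ≤ K * min u.2 (u.2^2) := Gsq_integral_le hcμ hu2
  have hm1 : (0:ℝ) ≤ min u.1 (u.1^2) := le_min hu1.le (sq_nonneg _)
  have hm2 : (0:ℝ) ≤ min u.2 (u.2^2) := le_min hu2.le (sq_nonneg _)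
  have hgprod : (∫ x, (G cμ u.1 x)^2) * (∫ x, (G cμ u.2 x)^2)
      ≤ (K * min u.1 (u.1^2)) * (K * min u.2 (u.2^2)) :=
    mul_le_mul hg1 hg2 (integral_nonneg fun x => sq_nonneg _) (by positivity)
  calc (∫ x : ℝ × ℝ, (μ (box x u))^2)
      ≤ Cμ^2 * ((∫ x, (G cμ u.1 x)^2) * ∫ x, (G cμ u.2 x)^2) := hval ▸ hmono
    _ ≤ Cμ^2 * ((K * min u.1 (u.1^2)) * (K * min u.2 (u.2^2))) :=
        mul_le_mul_of_nonneg_left hgprod (by positivity)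
    _ = Cμ^2 * K^2 * min u.1 (u.1^2) * min u.2 (u.2^2) := by ring
end

section
/- Let γ₁, γ₂ ∈ (1,2) and let μ be a finite signed measure on ℝ² for which there exist C > 0 and exponents α₁ ∈ (γ₁, 2], α₂ ∈ (γ₂, 2] such that ∫_{ℝ²} μ(B(x,u))² dx ≤ C · min(u₁, u₁^{α₁}) · min(u₂, u₂^{α₂}) for all u ∈ (0,∞)². Then ∫_{ℝ² × (0,∞)²} μ(B(x,u))² u₁^{−γ₁−1} u₂^{−γ₂−1} d(x,u) < ∞ (Lemma 3.2). -/
open MeasureTheory Filter Set Topology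

lemma box_measurableSet (x u : ℝ × ℝ) : MeasurableSet (box x u) :=
  (measurableSet_Icc).prod measurableSet_Icc

lemma mem_box_symm {x u y : ℝ × ℝ} : y ∈ box x u ↔ x ∈ box y u := by
  simp only [box, mem_prod, mem_Icc]
  constructor <;> rintro ⟨⟨h1, h2⟩, h3, h4⟩ <;> exact ⟨⟨by linarith, by linarith⟩, by linarith, by linarith⟩

lemma volume_box (y u : ℝ × ℝ) :
    volume (box y u) = ENNReal.ofReal u.1 * ENNReal.ofReal u.2 := by
  have h1 : y.1 + u.1 / 2 - (y.1 - u.1 / 2) = u.1 := by ring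
  have h2 : y.2 + u.2 / 2 - (y.2 - u.2 / 2) = u.2 := by ring
  rw [box, Measure.volume_eq_prod ℝ ℝ, Measure.prod_prod, Real.volume_Icc, Real.volume_Icc, h1, h2]

/-- The graph set of the box relation is measurable. -/
lemma box_rel_measurable :
    MeasurableSet {q : ((ℝ × ℝ) × (ℝ × ℝ)) × (ℝ × ℝ) | q.2 ∈ box q.1.1 q.1.2} := by
  have : {q : ((ℝ × ℝ) × (ℝ × ℝ)) × (ℝ × ℝ) | q.2 ∈ box q.1.1 q.1.2}
      = {q : ((ℝ × ℝ) × (ℝ × ℝ)) × (ℝ × ℝ) | q.1.1.1 - q.1.2.1 / 2 ≤ q.2.1}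
        ∩ {q | q.2.1 ≤ q.1.1.1 + q.1.2.1 / 2}
        ∩ ({q | q.1.1.2 - q.1.2.2 / 2 ≤ q.2.2} ∩ {q | q.2.2 ≤ q.1.1.2 + q.1.2.2 / 2}) := by
    ext q
    simp only [box, mem_prod, mem_Icc, mem_inter_iff, mem_setOf_eq]
  rw [this]
  refine (MeasurableSet.inter ?_ ?_).inter (MeasurableSet.inter ?_ ?_) <;>
    exact measurableSet_le (by fun_prop) (by fun_prop)

lemma measurable_meas_box (ν : Measure (ℝ × ℝ)) [IsFiniteMeasure ν] :
    Measurable fun p : (ℝ × ℝ) × (ℝ × ℝ) => ν (box p.1 p.2) := by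
  exact measurable_measure_prodMk_left (ν := ν) box_rel_measurable

lemma box_rel_measurable' (u : ℝ × ℝ) :
    MeasurableSet {q : (ℝ × ℝ) × (ℝ × ℝ) | q.2 ∈ box q.1 u} :=
  box_rel_measurable.preimage
    (f := fun q : (ℝ × ℝ) × (ℝ × ℝ) => ((q.1, u), q.2)) (by fun_prop)

lemma measurable_meas_box' (ν : Measure (ℝ × ℝ)) [IsFiniteMeasure ν] (u : ℝ × ℝ) :
    Measurable fun x : ℝ × ℝ => ν (box x u) :=
  measurable_measure_prodMk_left (ν := ν) (box_rel_measurable' u)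

lemma lintegral_meas_box (ν : Measure (ℝ × ℝ)) [IsFiniteMeasure ν] (u : ℝ × ℝ) :
    ∫⁻ x : ℝ × ℝ, ν (box x u) = ν univ * (ENNReal.ofReal u.1 * ENNReal.ofReal u.2) := by
  have hS : MeasurableSet {q : (ℝ × ℝ) × (ℝ × ℝ) | q.2 ∈ box q.1 u} :=
    box_rel_measurable' u
  have h1 : ∫⁻ x : ℝ × ℝ, ν (box x u)
      = (volume.prod ν) {q : (ℝ × ℝ) × (ℝ × ℝ) | q.2 ∈ box q.1 u} := by
    rw [Measure.prod_apply hS]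
    rfl
  rw [h1, Measure.prod_apply_symm hS]
  have h2 : ∀ y : ℝ × ℝ, ((fun x : ℝ × ℝ => (x, y)) ⁻¹' {q : (ℝ × ℝ) × (ℝ × ℝ) | q.2 ∈ box q.1 u})
      = box y u := by
    intro y
    ext x
    simp only [mem_preimage, mem_setOf_eq]
    exact mem_box_symm
  simp_rw [h2, volume_box]
  rw [lintegral_const, mul_comm]

lemma signedMeasure_box_eq (μ : MeasureTheory.SignedMeasure (ℝ × ℝ)) (x u : ℝ × ℝ) :
    μ (box x u) = (μ.toJordanDecomposition.posPart (box x u)).toReal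
      - (μ.toJordanDecomposition.negPart (box x u)).toReal := by
  conv_lhs => rw [← μ.toSignedMeasure_toJordanDecomposition]
  exact Measure.toSignedMeasure_sub_apply (box_measurableSet x u)

lemma signedMeasure_box_abs_le (μ : MeasureTheory.SignedMeasure (ℝ × ℝ)) (x u : ℝ × ℝ) :
    |μ (box x u)| ≤ (μ.totalVariation (box x u)).toReal := by
  rw [signedMeasure_box_eq, SignedMeasure.totalVariation, Measure.add_apply,
    ENNReal.toReal_add (measure_ne_top _ _) (measure_ne_top _ _)]
  have h1 : (0:ℝ) ≤ (μ.toJordanDecomposition.posPart (box x u)).toReal := ENNReal.toReal_nonneg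
  have h2 : (0:ℝ) ≤ (μ.toJordanDecomposition.negPart (box x u)).toReal := ENNReal.toReal_nonneg
  rw [abs_le]
  constructor <;> linarith

lemma measurable_signedMeasure_box (μ : MeasureTheory.SignedMeasure (ℝ × ℝ)) :
    Measurable fun p : (ℝ × ℝ) × (ℝ × ℝ) => μ (box p.1 p.2) := by
  have heq : (fun p : (ℝ × ℝ) × (ℝ × ℝ) => μ (box p.1 p.2))
      = fun p => (μ.toJordanDecomposition.posPart (box p.1 p.2)).toReal
        - (μ.toJordanDecomposition.negPart (box p.1 p.2)).toReal :=
    funext fun p => signedMeasure_box_eq μ p.1 p.2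
  rw [heq]
  exact ((measurable_meas_box μ.toJordanDecomposition.posPart).ennreal_toReal).sub
    ((measurable_meas_box μ.toJordanDecomposition.negPart).ennreal_toReal)

lemma measurable_signedMeasure_box' (μ : MeasureTheory.SignedMeasure (ℝ × ℝ)) (u : ℝ × ℝ) :
    Measurable fun x : ℝ × ℝ => μ (box x u) := by
  have heq : (fun x : ℝ × ℝ => μ (box x u))
      = fun x => (μ.toJordanDecomposition.posPart (box x u)).toReal
        - (μ.toJordanDecomposition.negPart (box x u)).toReal :=
    funext fun x => signedMeasure_box_eq μ x u
  rw [heq]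
  exact ((measurable_meas_box' μ.toJordanDecomposition.posPart u).ennreal_toReal).sub
    ((measurable_meas_box' μ.toJordanDecomposition.negPart u).ennreal_toReal)

set_option maxHeartbeats 2000000 in
lemma integrable_sq_box (μ : MeasureTheory.SignedMeasure (ℝ × ℝ)) (u : ℝ × ℝ) :
    Integrable (fun x : ℝ × ℝ => (μ (box x u)) ^ 2) := by
  haveI : IsFiniteMeasure μ.totalVariation := by
    unfold SignedMeasure.totalVariation; infer_instance
  have hmeas : Measurable fun x : ℝ × ℝ => μ (box x u) :=
    measurable_signedMeasure_box' μ u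
  have hmeasν : Measurable fun x : ℝ × ℝ => (μ.totalVariation (box x u)).toReal :=
    (measurable_meas_box' μ.totalVariation u).ennreal_toReal
  have hg : Integrable (fun x : ℝ × ℝ =>
      (μ.totalVariation univ).toReal * (μ.totalVariation (box x u)).toReal) := by
    refine ⟨(hmeasν.const_mul _).aestronglyMeasurable, ?_⟩
    rw [hasFiniteIntegral_iff_ofReal
      (ae_of_all _ fun x => mul_nonneg ENNReal.toReal_nonneg ENNReal.toReal_nonneg)]
    have hptw : ∀ x : ℝ × ℝ, ENNReal.ofReal
        ((μ.totalVariation univ).toReal * (μ.totalVariation (box x u)).toReal)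
        = μ.totalVariation univ * μ.totalVariation (box x u) := by
      intro x
      rw [ENNReal.ofReal_mul ENNReal.toReal_nonneg, ENNReal.ofReal_toReal (measure_ne_top _ _),
        ENNReal.ofReal_toReal (measure_ne_top _ _)]
    calc ∫⁻ x : ℝ × ℝ, ENNReal.ofReal
          ((μ.totalVariation univ).toReal * (μ.totalVariation (box x u)).toReal)
        = ∫⁻ x : ℝ × ℝ, μ.totalVariation univ
            * μ.totalVariation (box x u) := by simp_rw [hptw]
      _ = μ.totalVariation univ
            * ∫⁻ x : ℝ × ℝ, μ.totalVariation (box x u) :=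
          lintegral_const_mul _ (measurable_meas_box' μ.totalVariation u)
      _ < ⊤ := by
          rw [lintegral_meas_box]
          exact ENNReal.mul_lt_top (measure_lt_top _ _)
            (ENNReal.mul_lt_top (measure_lt_top _ _)
              (ENNReal.mul_lt_top ENNReal.ofReal_lt_top ENNReal.ofReal_lt_top))
  refine hg.mono' (hmeas.pow_const 2).aestronglyMeasurable (ae_of_all _ fun x => ?_)
  have h1 : |μ (box x u)| ≤ (μ.totalVariation (box x u)).toReal := signedMeasure_box_abs_le μ x u
  have h2 : (μ.totalVariation (box x u)).toReal ≤ (μ.totalVariation univ).toReal :=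
    ENNReal.toReal_mono (measure_ne_top _ _) (measure_mono (subset_univ _))
  have h3 : (0:ℝ) ≤ |μ (box x u)| := abs_nonneg _
  calc ‖(μ (box x u)) ^ 2‖ = |μ (box x u)| * |μ (box x u)| := by
        rw [Real.norm_eq_abs, abs_pow, sq]
    _ ≤ (μ.totalVariation univ).toReal * (μ.totalVariation (box x u)).toReal :=
        mul_le_mul (le_trans h1 h2) h1 h3 (le_trans h3 (le_trans h1 h2))

/-- One-dimensional finiteness: `∫₀^∞ min(t, t^α) t^{-(γ+1)} dt < ∞` when `1 < γ < α`. -/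
lemma oneDim_lintegral_lt_top {γ α : ℝ} (hγ : 1 < γ) (hαγ : γ < α) :
    ∫⁻ t in Ioi (0:ℝ), ENNReal.ofReal (min t (t ^ α) * t ^ (-(γ + 1))) < ⊤ := by
  have hmeas : Measurable fun t : ℝ => min t (t ^ α) * t ^ (-(γ + 1)) := by
    exact (measurable_id.min (measurable_id.pow_const _)).mul (measurable_id.pow_const _)
  have hInt : IntegrableOn (fun t : ℝ => min t (t ^ α) * t ^ (-(γ + 1))) (Ioi 0) := by
    have hsplit : Ioi (0:ℝ) = Ioc 0 1 ∪ Ioi 1 := (Ioc_union_Ioi_eq_Ioi (by norm_num)).symm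
    rw [hsplit]
    refine IntegrableOn.union ?_ ?_
    · -- on (0,1]: bound by t^(α - γ - 1)
      have hmaj : IntegrableOn (fun t : ℝ => t ^ (α - γ - 1)) (Ioc (0:ℝ) 1) := by
        have := intervalIntegral.intervalIntegrable_rpow' (a := 0) (b := 1)
          (r := α - γ - 1) (by linarith)
        rwa [intervalIntegrable_iff_integrableOn_Ioc_of_le (by norm_num)] at this
      refine hmaj.mono' hmeas.aestronglyMeasurable.restrict ?_
      rw [ae_restrict_iff' measurableSet_Ioc]
      refine ae_of_all _ fun t ht => ?_
      have ht0 : 0 < t := ht.1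
      have hmin_nonneg : 0 ≤ min t (t ^ α) := le_min ht0.le (Real.rpow_nonneg ht0.le α)
      have hw : (0:ℝ) ≤ t ^ (-(γ + 1)) := Real.rpow_nonneg ht0.le _
      rw [Real.norm_eq_abs, abs_of_nonneg (mul_nonneg hmin_nonneg hw)]
      calc min t (t ^ α) * t ^ (-(γ + 1)) ≤ t ^ α * t ^ (-(γ + 1)) :=
            mul_le_mul_of_nonneg_right (min_le_right _ _) hw
        _ = t ^ (α - γ - 1) := by
            rw [← Real.rpow_add ht0]; congr 1; ring
    · -- on (1,∞): bound by t^(-γ)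
      have hmaj : IntegrableOn (fun t : ℝ => t ^ (-γ)) (Ioi (1:ℝ)) :=
        integrableOn_Ioi_rpow_of_lt (by linarith) one_pos
      refine hmaj.mono' hmeas.aestronglyMeasurable.restrict ?_
      rw [ae_restrict_iff' measurableSet_Ioi]
      refine ae_of_all _ fun t ht => ?_
      have ht0 : (0:ℝ) < t := lt_trans one_pos ht
      have hmin_nonneg : 0 ≤ min t (t ^ α) := le_min ht0.le (Real.rpow_nonneg ht0.le α)
      have hw : (0:ℝ) ≤ t ^ (-(γ + 1)) := Real.rpow_nonneg ht0.le _
      rw [Real.norm_eq_abs, abs_of_nonneg (mul_nonneg hmin_nonneg hw)]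
      calc min t (t ^ α) * t ^ (-(γ + 1)) ≤ t * t ^ (-(γ + 1)) :=
            mul_le_mul_of_nonneg_right (min_le_left _ _) hw
        _ = t ^ (-γ) := by
            rw [show t * t ^ (-(γ + 1)) = t ^ (1 + -(γ + 1)) by
                rw [Real.rpow_add ht0, Real.rpow_one]]
            congr 1; ring
  exact hInt.lintegral_lt_top

/-- Lemma 3.2: for `μ ∈ 𝓜^{γ₁,γ₂}`, the integral
`∫ μ(B(x,u))² u₁^{-γ₁-1} u₂^{-γ₂-1} d(x,u)` is finite. -/
theorem integral_sq_weighted_finite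
    (γ₁ γ₂ : ℝ) (hγ₁ : γ₁ ∈ Ioo (1 : ℝ) 2) (hγ₂ : γ₂ ∈ Ioo (1 : ℝ) 2)
    (μ : MeasureTheory.SignedMeasure (ℝ × ℝ))
    (C : ℝ) (hC : 0 < C) (α₁ α₂ : ℝ) (hα₁ : α₁ ∈ Ioc γ₁ 2) (hα₂ : α₂ ∈ Ioc γ₂ 2)
    (hbound : ∀ u ∈ posQuadrant,
      (∫ x : ℝ × ℝ, (μ (box x u)) ^ 2) ≤ C * min u.1 (u.1 ^ α₁) * min u.2 (u.2 ^ α₂)) :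
    (∫⁻ p : (ℝ × ℝ) × (ℝ × ℝ) in univ ×ˢ posQuadrant,
      ENNReal.ofReal ((μ (box p.1 p.2)) ^ 2 * p.2.1 ^ (-(γ₁ + 1)) * p.2.2 ^ (-(γ₂ + 1)))) < ⊤ := by
  have hmeasF : Measurable fun p : (ℝ × ℝ) × (ℝ × ℝ) => μ (box p.1 p.2) :=
    measurable_signedMeasure_box μ
  have hmeas : Measurable fun p : (ℝ × ℝ) × (ℝ × ℝ) =>
      ENNReal.ofReal ((μ (box p.1 p.2)) ^ 2 * p.2.1 ^ (-(γ₁ + 1)) * p.2.2 ^ (-(γ₂ + 1))) := by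
    apply Measurable.ennreal_ofReal
    exact ((hmeasF.pow_const 2).mul
      ((measurable_snd.fst).pow_const _)).mul ((measurable_snd.snd).pow_const _)
  -- rewrite the restricted measure as a product
  have hrw : (volume : Measure ((ℝ × ℝ) × (ℝ × ℝ))).restrict (univ ×ˢ posQuadrant)
      = (volume : Measure (ℝ × ℝ)).prod (volume.restrict posQuadrant) := by
    rw [Measure.volume_eq_prod (ℝ × ℝ) (ℝ × ℝ), ← Measure.prod_restrict, Measure.restrict_univ]
  rw [hrw, lintegral_prod_symm _ (hmeas.aemeasurable.mono_ac
    (Measure.AbsolutelyContinuous.rfl.prod (Measure.restrict_le_self.absolutelyContinuous)))]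
  -- outer bound function
  set G : ℝ × ℝ → ENNReal := fun u =>
    (ENNReal.ofReal C * (ENNReal.ofReal (min u.1 (u.1 ^ α₁)) * ENNReal.ofReal (u.1 ^ (-(γ₁ + 1)))))
    * (ENNReal.ofReal (min u.2 (u.2 ^ α₂)) * ENNReal.ofReal (u.2 ^ (-(γ₂ + 1)))) with hG
  have hposQ : MeasurableSet posQuadrant := measurableSet_Ioi.prod measurableSet_Ioi
  have key : ∀ u ∈ posQuadrant,
      (∫⁻ x : ℝ × ℝ, ENNReal.ofReal
        ((μ (box x u)) ^ 2 * u.1 ^ (-(γ₁ + 1)) * u.2 ^ (-(γ₂ + 1)))) ≤ G u := by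
    intro u hu
    obtain ⟨hu1, hu2⟩ := hu
    have hw1 : (0:ℝ) ≤ u.1 ^ (-(γ₁ + 1)) := Real.rpow_nonneg (le_of_lt hu1) _
    have hw2 : (0:ℝ) ≤ u.2 ^ (-(γ₂ + 1)) := Real.rpow_nonneg (le_of_lt hu2) _
    have hFmeas : Measurable fun x : ℝ × ℝ => μ (box x u) :=
      measurable_signedMeasure_box' μ u
    have hsplit : ∀ x : ℝ × ℝ,
        ENNReal.ofReal ((μ (box x u)) ^ 2 * u.1 ^ (-(γ₁ + 1)) * u.2 ^ (-(γ₂ + 1)))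
        = ENNReal.ofReal ((μ (box x u)) ^ 2) * ENNReal.ofReal (u.1 ^ (-(γ₁ + 1)))
          * ENNReal.ofReal (u.2 ^ (-(γ₂ + 1))) := by
      intro x
      rw [ENNReal.ofReal_mul (mul_nonneg (sq_nonneg _) hw1), ENNReal.ofReal_mul (sq_nonneg _)]
    simp_rw [hsplit]
    rw [lintegral_mul_const (f := fun x : ℝ × ℝ => ENNReal.ofReal ((μ (box x u)) ^ 2) * ENNReal.ofReal (u.1 ^ (-(γ₁ + 1))))
        _ ((hFmeas.pow_const 2).ennreal_ofReal.mul measurable_const),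
      lintegral_mul_const _ (hFmeas.pow_const 2).ennreal_ofReal]
    have hxint : (∫⁻ x : ℝ × ℝ, ENNReal.ofReal ((μ (box x u)) ^ 2))
        ≤ ENNReal.ofReal (C * min u.1 (u.1 ^ α₁) * min u.2 (u.2 ^ α₂)) := by
      rw [← ofReal_integral_eq_lintegral_ofReal (integrable_sq_box μ u)
        (ae_of_all _ fun x => sq_nonneg _)]
      exact ENNReal.ofReal_le_ofReal (hbound u ⟨hu1, hu2⟩)
    calc (∫⁻ x : ℝ × ℝ, ENNReal.ofReal ((μ (box x u)) ^ 2))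
          * ENNReal.ofReal (u.1 ^ (-(γ₁ + 1))) * ENNReal.ofReal (u.2 ^ (-(γ₂ + 1)))
        ≤ ENNReal.ofReal (C * min u.1 (u.1 ^ α₁) * min u.2 (u.2 ^ α₂))
          * ENNReal.ofReal (u.1 ^ (-(γ₁ + 1))) * ENNReal.ofReal (u.2 ^ (-(γ₂ + 1))) := by
          exact mul_le_mul_left (mul_le_mul_left hxint _) _
      _ = G u := by
          rw [hG]
          rw [ENNReal.ofReal_mul (mul_nonneg hC.le (le_min (le_of_lt hu1)
            (Real.rpow_nonneg (le_of_lt hu1) _))), ENNReal.ofReal_mul hC.le]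
          ring
  have hGbound : (∫⁻ u in posQuadrant, (∫⁻ x : ℝ × ℝ, ENNReal.ofReal
        ((μ (box x u)) ^ 2 * u.1 ^ (-(γ₁ + 1)) * u.2 ^ (-(γ₂ + 1)))))
      ≤ ∫⁻ u in posQuadrant, G u :=
    setLIntegral_mono' hposQ key
  refine lt_of_le_of_lt hGbound ?_
  -- compute ∫ G over the quadrant as a product of two 1-d integrals
  have hrw2 : (volume : Measure (ℝ × ℝ)).restrict posQuadrant
      = (volume.restrict (Ioi (0:ℝ))).prod (volume.restrict (Ioi (0:ℝ))) := by
    rw [posQuadrant, Measure.volume_eq_prod ℝ ℝ, Measure.prod_restrict]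
  rw [hrw2]
  have hf1 : AEMeasurable (fun t : ℝ => ENNReal.ofReal C
      * (ENNReal.ofReal (min t (t ^ α₁)) * ENNReal.ofReal (t ^ (-(γ₁ + 1)))))
      (volume.restrict (Ioi (0:ℝ))) := by
    apply Measurable.aemeasurable
    exact measurable_const.mul (((measurable_id.min (measurable_id.pow_const _)).ennreal_ofReal).mul
      (measurable_id.pow_const _).ennreal_ofReal)
  have hf2 : AEMeasurable (fun t : ℝ =>
      ENNReal.ofReal (min t (t ^ α₂)) * ENNReal.ofReal (t ^ (-(γ₂ + 1))))
      (volume.restrict (Ioi (0:ℝ))) := by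
    apply Measurable.aemeasurable
    exact (((measurable_id.min (measurable_id.pow_const _)).ennreal_ofReal).mul
      (measurable_id.pow_const _).ennreal_ofReal)
  rw [hG]
  rw [lintegral_prod_mul hf1 hf2]
  -- each factor is finite
  have hone : ∀ (γ α : ℝ), 1 < γ → γ < α →
      (∫⁻ t in Ioi (0:ℝ), ENNReal.ofReal (min t (t ^ α)) * ENNReal.ofReal (t ^ (-(γ + 1)))) < ⊤ := by
    intro γ α hγ hαγ
    have : (∫⁻ t in Ioi (0:ℝ), ENNReal.ofReal (min t (t ^ α)) * ENNReal.ofReal (t ^ (-(γ + 1))))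
        = ∫⁻ t in Ioi (0:ℝ), ENNReal.ofReal (min t (t ^ α) * t ^ (-(γ + 1))) := by
      refine setLIntegral_congr_fun measurableSet_Ioi (fun t ht => ?_)
      rw [ENNReal.ofReal_mul (le_min (le_of_lt ht) (Real.rpow_nonneg (le_of_lt ht) _))]
    rw [this]
    exact oneDim_lintegral_lt_top hγ hαγ
  have h1 : (∫⁻ t in Ioi (0:ℝ), ENNReal.ofReal C
      * (ENNReal.ofReal (min t (t ^ α₁)) * ENNReal.ofReal (t ^ (-(γ₁ + 1))))) < ⊤ := by
    rw [lintegral_const_mul' _ _ ENNReal.ofReal_ne_top]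
    exact ENNReal.mul_lt_top ENNReal.ofReal_lt_top (hone γ₁ α₁ hγ₁.1 hα₁.1)
  have h2 : (∫⁻ t in Ioi (0:ℝ),
      ENNReal.ofReal (min t (t ^ α₂)) * ENNReal.ofReal (t ^ (-(γ₂ + 1)))) < ⊤ :=
    hone γ₂ α₂ hγ₂.1 hα₂.1
  exact ENNReal.mul_lt_top h1 h2
end

section
/- Let f : ℝ² → ℝ be measurable and suppose |f(x)| ≤ C_μ exp(−c_μ(|x₁| + |x₂|)) for some constants C_μ, c_μ > 0 and all x ∈ ℝ². Define the maximal function m*(x) = sup_{u ∈ (0,∞)²} (u₁ u₂)^{−1} ∫_{B(x,u)} |f(y)| dy. Then for all x ∈ ℝ², m*(x) ≤ g(x) where g(x) = C_μ · min(1, 2/(c_μ |x₁|)) · min(1, 2/(c_μ |x₂|)), and g belongs to L^β(ℝ²) for every β > 1 (Lemma 3.5(ii)). -/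
open MeasureTheory Filter Set Topology

open scoped ENNReal NNReal

noncomputable def hFun (c x : ℝ) : ℝ := if x = 0 then 1 else min 1 (2 / (c * |x|))

lemma hFun_nonneg {c : ℝ} (hc : 0 < c) (x : ℝ) : 0 ≤ hFun c x := by
  unfold hFun
  split
  · norm_num
  · exact le_min zero_le_one (by positivity)

lemma measurable_hFun (c : ℝ) : Measurable (hFun c) := by
  unfold hFun
  refine Measurable.ite (measurableSet_singleton 0) measurable_const ?_
  exact measurable_const.min (measurable_const.div (measurable_const.mul measurable_abs))

lemma hFun_le_bracket {c : ℝ} (hc : 0 < c) (x : ℝ) :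
    hFun c x ≤ (1 + 2 / c) * (1 + |x|)⁻¹ := by
  have hx : (0:ℝ) ≤ |x| := abs_nonneg x
  unfold hFun
  split
  · rename_i h; subst h; simp; positivity
  · rename_i hx0
    have hxpos : 0 < |x| := abs_pos.2 hx0
    rw [← div_eq_mul_inv]
    rcases le_or_gt (c * |x|) 2 with h | h
    · refine le_trans (min_le_left _ _) ?_
      rw [le_div_iff₀ (by positivity), one_mul]
      have hxc : |x| ≤ 2 / c := (le_div_iff₀ hc).2 (by rw [mul_comm]; exact h)
      linarith
    · refine le_trans (min_le_right _ _) ?_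
      rw [div_le_div_iff₀ (by positivity) (by positivity)]
      have h2 : 2 / c * c = 2 := div_mul_cancel₀ 2 hc.ne'
      nlinarith [h2, hx]

lemma integrable_exp_neg_mul_abs {c : ℝ} (hc : 0 < c) :
    Integrable (fun t : ℝ => Real.exp (-c * |t|)) := by
  have h1 : IntegrableOn (fun t : ℝ => Real.exp (-c * |t|)) (Ici 0) := by
    have h := exp_neg_integrableOn_Ioi 0 hc
    rw [← integrableOn_Ici_iff_integrableOn_Ioi] at h
    refine h.congr_fun (fun t ht => ?_) measurableSet_Ici
    rw [abs_of_nonneg ht]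
  have h2 : IntegrableOn (fun t : ℝ => Real.exp (-c * |t|)) (Iic 0) := by
    rw [← Measure.map_neg_eq_self (volume : Measure ℝ)]
    have m : MeasurableEmbedding fun x : ℝ => -x := (Homeomorph.neg ℝ).measurableEmbedding
    rw [m.integrableOn_map_iff]
    simp_rw [Function.comp_def, abs_neg, neg_preimage, neg_Iic, neg_zero]
    exact h1
  have h3 := h2.union h1
  rwa [Iic_union_Ici, integrableOn_univ] at h3

lemma integral_exp_neg_mul_abs {c : ℝ} (hc : 0 < c) :
    ∫ t : ℝ, Real.exp (-c * |t|) = 2 / c := by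
  rw [integral_comp_abs (f := fun t => Real.exp (-c * t))]
  have h := integral_comp_mul_left_Ioi (fun y => Real.exp (-y)) 0 hc
  simp only [mul_zero, neg_mul, integral_exp_neg_Ioi_zero, smul_eq_mul, mul_one] at h
  simp only [neg_mul]
  rw [h, div_eq_mul_inv]

lemma key1D {c : ℝ} (hc : 0 < c) (x : ℝ) {u : ℝ} (hu : 0 < u) :
    ∫ t in Icc (x - u / 2) (x + u / 2), Real.exp (-c * |t|) ≤ u * hFun c x := by
  have hvol : volume (Icc (x - u / 2) (x + u / 2)) = ENNReal.ofReal u := by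
    rw [Real.volume_Icc]; congr 1; ring
  have hInt : IntegrableOn (fun t => Real.exp (-c * |t|)) (Icc (x - u / 2) (x + u / 2)) :=
    (integrable_exp_neg_mul_abs hc).integrableOn
  have hconst : ∀ C : ℝ, (∀ t ∈ Icc (x - u / 2) (x + u / 2), Real.exp (-c * |t|) ≤ C) →
      ∫ t in Icc (x - u / 2) (x + u / 2), Real.exp (-c * |t|) ≤ u * C := by
    intro C h
    calc ∫ t in Icc (x - u / 2) (x + u / 2), Real.exp (-c * |t|)
        ≤ ∫ _ in Icc (x - u / 2) (x + u / 2), C :=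
          setIntegral_mono_on hInt
            (integrableOn_const (by rw [hvol]; exact ENNReal.ofReal_ne_top))
            measurableSet_Icc h
      _ = (volume (Icc (x - u / 2) (x + u / 2))).toReal • C := setIntegral_const C
      _ = u * C := by rw [hvol, ENNReal.toReal_ofReal hu.le, smul_eq_mul]
  have hone : ∫ t in Icc (x - u / 2) (x + u / 2), Real.exp (-c * |t|) ≤ u * 1 :=
    hconst 1 (fun t _ => by
      rw [← Real.exp_zero]
      exact Real.exp_le_exp.2 (by nlinarith [abs_nonneg t]))
  unfold hFun
  split
  · exact hone
  · rename_i hx0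
    have hxpos : 0 < |x| := abs_pos.2 hx0
    rw [mul_min_of_nonneg _ _ hu.le]
    refine le_min hone ?_
    rcases le_or_gt u |x| with hcase | hcase
    · refine hconst _ ?_
      intro t ht
      obtain ⟨h2, h3⟩ := ht
      have h2' : x - u / 2 ≤ t := h2
      have h3' : t ≤ x + u / 2 := h3
      have h1 : |x| / 2 ≤ |t| := by
        rcases abs_cases t with ⟨h4, h5⟩ | ⟨h4, h5⟩ <;>
          rcases abs_cases x with ⟨h6, h7⟩ | ⟨h6, h7⟩ <;> linarith
      have hA : Real.exp (-c * |t|) ≤ Real.exp (-(c * |x| / 2)) := by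
        apply Real.exp_le_exp.2; nlinarith
      refine hA.trans ?_
      have h3p : (0:ℝ) < c * |x| / 2 := by positivity
      have h4 : Real.exp (-(c * |x| / 2)) ≤ (c * |x| / 2)⁻¹ := by
        rw [Real.exp_neg]
        exact inv_anti₀ h3p (by nlinarith [Real.add_one_le_exp (c * |x| / 2)])
      refine h4.trans ?_
      rw [inv_div]
    · have hle : ∫ t in Icc (x - u / 2) (x + u / 2), Real.exp (-c * |t|)
          ≤ ∫ t : ℝ, Real.exp (-c * |t|) :=
        setIntegral_le_integral (integrable_exp_neg_mul_abs hc)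
          (ae_of_all _ fun t => (Real.exp_pos _).le)
      rw [integral_exp_neg_mul_abs hc] at hle
      refine hle.trans ?_
      rw [div_le_iff₀ hc]
      have he : u * (2 / (c * |x|)) * c = 2 * u / |x| := by field_simp
      rw [he, le_div_iff₀ hxpos]
      nlinarith

lemma lintegral_hFun_lt_top {c β : ℝ} (hc : 0 < c) (hβ : 1 < β) :
    ∫⁻ t : ℝ, (‖hFun c t‖₊ : ℝ≥0∞) ^ β < ⊤ := by
  have hβ0 : (0:ℝ) ≤ β := by linarith
  have hK0 : (0:ℝ) < 1 + 2 / c := by positivity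
  have hint : Integrable (fun t : ℝ => (1 + 2 / c) ^ β * (1 + |t|) ^ (-β)) := by
    have h := (integrable_one_add_norm (E := ℝ) (μ := volume) (r := β)
      (by rw [Module.finrank_self]; exact_mod_cast hβ)).const_mul ((1 + 2 / c) ^ β)
    simpa [Real.norm_eq_abs] using h
  have hbd : ∀ t : ℝ, (‖hFun c t‖₊ : ℝ≥0∞) ^ β
      ≤ ENNReal.ofReal ((1 + 2 / c) ^ β * (1 + |t|) ^ (-β)) := by
    intro t
    have h1 : (0:ℝ) < 1 + |t| := by positivity
    rw [← enorm_eq_nnnorm, Real.enorm_eq_ofReal (hFun_nonneg hc t),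
      ENNReal.ofReal_rpow_of_nonneg (hFun_nonneg hc t) hβ0]
    apply ENNReal.ofReal_le_ofReal
    calc (hFun c t) ^ β ≤ ((1 + 2 / c) * (1 + |t|)⁻¹) ^ β :=
          Real.rpow_le_rpow (hFun_nonneg hc t) (hFun_le_bracket hc t) hβ0
      _ = (1 + 2 / c) ^ β * (1 + |t|) ^ (-β) := by
          rw [Real.mul_rpow hK0.le (by positivity), Real.rpow_neg h1.le,
            ← Real.inv_rpow h1.le]
  calc ∫⁻ t : ℝ, (‖hFun c t‖₊ : ℝ≥0∞) ^ β
      ≤ ∫⁻ t : ℝ, ENNReal.ofReal ((1 + 2 / c) ^ β * (1 + |t|) ^ (-β)) := lintegral_mono hbd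
    _ < ⊤ := hint.lintegral_lt_top
/-- Lemma 3.5(ii): the maximal function of an exponentially decaying density is dominated
by an explicit function `g` lying in `L^β(ℝ²)` for every `β > 1`.  (At points where a
coordinate vanishes the corresponding factor of `g` is interpreted as `1`.) -/
theorem maximal_function_bound
    (f : ℝ × ℝ → ℝ) (hfm : Measurable f)
    (Cμ cμ : ℝ) (hCμ : 0 < Cμ) (hcμ : 0 < cμ)
    (hdecay : ∀ x : ℝ × ℝ, |f x| ≤ Cμ * Real.exp (-cμ * (|x.1| + |x.2|))) :
    (∀ x : ℝ × ℝ, ∀ u ∈ posQuadrant,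
      (u.1 * u.2)⁻¹ * ∫ y in box x u, |f y| ≤
        Cμ * (if x.1 = 0 then 1 else min 1 (2 / (cμ * |x.1|))) *
          (if x.2 = 0 then 1 else min 1 (2 / (cμ * |x.2|)))) ∧
    (∀ β : ℝ, 1 < β →
      MemLp (fun x : ℝ × ℝ =>
          Cμ * (if x.1 = 0 then 1 else min 1 (2 / (cμ * |x.1|))) *
            (if x.2 = 0 then 1 else min 1 (2 / (cμ * |x.2|))))
        (ENNReal.ofReal β) volume) := by
  constructor
  · rintro x u hu
    obtain ⟨hu1, hu2⟩ : 0 < u.1 ∧ 0 < u.2 := hu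
    show (u.1 * u.2)⁻¹ * ∫ y in box x u, |f y| ≤ Cμ * hFun cμ x.1 * hFun cμ x.2
    set g : ℝ × ℝ → ℝ := fun y => Cμ * (Real.exp (-cμ * |y.1|) * Real.exp (-cμ * |y.2|))
      with hg
    have hkey : ∀ y : ℝ × ℝ, |f y| ≤ g y := by
      intro y
      have he : Real.exp (-cμ * |y.1|) * Real.exp (-cμ * |y.2|)
          = Real.exp (-cμ * (|y.1| + |y.2|)) := by
        rw [← Real.exp_add]; congr 1; ring
      show |f y| ≤ Cμ * (Real.exp (-cμ * |y.1|) * Real.exp (-cμ * |y.2|))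
      rw [he]; exact hdecay y
    have hgc : Continuous g := by fun_prop
    have hbox_meas : MeasurableSet (box x u) := measurableSet_Icc.prod measurableSet_Icc
    have hcomp : IsCompact (box x u) := isCompact_Icc.prod isCompact_Icc
    have hgint : IntegrableOn g (box x u) := hgc.continuousOn.integrableOn_compact hcomp
    have hfint : IntegrableOn (fun y => |f y|) (box x u) := by
      refine Integrable.mono hgint hfm.abs.aestronglyMeasurable.restrict ?_
      refine ae_of_all _ fun y => ?_
      rw [Real.norm_eq_abs, Real.norm_eq_abs, abs_abs]
      exact (hkey y).trans (le_abs_self _)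
    have hmono : ∫ y in box x u, |f y| ≤ ∫ y in box x u, g y :=
      setIntegral_mono_on hfint hgint hbox_meas fun y _ => hkey y
    have hprod : ∫ y in box x u, g y
        = Cμ * ((∫ t in Icc (x.1 - u.1 / 2) (x.1 + u.1 / 2), Real.exp (-cμ * |t|)) *
            ∫ t in Icc (x.2 - u.2 / 2) (x.2 + u.2 / 2), Real.exp (-cμ * |t|)) := by
      simp only [hg]
      rw [integral_const_mul]
      congr 1
      rw [box, Measure.volume_eq_prod]
      exact setIntegral_prod_mul (fun t => Real.exp (-cμ * |t|))
        (fun t => Real.exp (-cμ * |t|)) _ _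
    have h1 := key1D hcμ x.1 hu1
    have h2 := key1D hcμ x.2 hu2
    have hI1nn : 0 ≤ ∫ t in Icc (x.1 - u.1 / 2) (x.1 + u.1 / 2), Real.exp (-cμ * |t|) :=
      setIntegral_nonneg measurableSet_Icc fun t _ => (Real.exp_pos _).le
    have hI2nn : 0 ≤ ∫ t in Icc (x.2 - u.2 / 2) (x.2 + u.2 / 2), Real.exp (-cμ * |t|) :=
      setIntegral_nonneg measurableSet_Icc fun t _ => (Real.exp_pos _).le
    rw [inv_mul_le_iff₀ (by positivity)]
    calc ∫ y in box x u, |f y| ≤ Cμ * ((∫ t in Icc (x.1 - u.1 / 2) (x.1 + u.1 / 2),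
            Real.exp (-cμ * |t|)) * ∫ t in Icc (x.2 - u.2 / 2) (x.2 + u.2 / 2),
            Real.exp (-cμ * |t|)) := hmono.trans_eq hprod
      _ ≤ Cμ * ((u.1 * hFun cμ x.1) * (u.2 * hFun cμ x.2)) := by
          refine mul_le_mul_of_nonneg_left ?_ hCμ.le
          exact mul_le_mul h1 h2 hI2nn
            (mul_nonneg hu1.le (hFun_nonneg hcμ _))
      _ = u.1 * u.2 * (Cμ * hFun cμ x.1 * hFun cμ x.2) := by ring
  · intro β hβ
    have hβ0 : (0:ℝ) < β := by linarith
    have hβ0' : (0:ℝ) ≤ β := hβ0.le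
    have hp0 : ENNReal.ofReal β ≠ 0 := by
      simp only [ne_eq, ENNReal.ofReal_eq_zero, not_le]; exact hβ0
    have hptop : ENNReal.ofReal β ≠ ∞ := ENNReal.ofReal_ne_top
    show MemLp (fun y : ℝ × ℝ => Cμ * hFun cμ y.1 * hFun cμ y.2) (ENNReal.ofReal β) volume
    have hmeas : Measurable (fun y : ℝ × ℝ => Cμ * hFun cμ y.1 * hFun cμ y.2) :=
      (measurable_const.mul ((measurable_hFun cμ).comp measurable_fst)).mul
        ((measurable_hFun cμ).comp measurable_snd)
    refine ⟨hmeas.aestronglyMeasurable, ?_⟩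
    rw [eLpNorm_eq_lintegral_rpow_enorm_toReal hp0 hptop]
    simp only [enorm_eq_nnnorm]
    refine ENNReal.rpow_lt_top_of_nonneg (by positivity) ?_
    rw [ENNReal.toReal_ofReal hβ0']
    have hFmeas : Measurable (fun t : ℝ => (‖hFun cμ t‖₊ : ℝ≥0∞) ^ β) :=
      ENNReal.continuous_rpow_const.measurable.comp (measurable_hFun cμ).nnnorm.coe_nnreal_ennreal
    have hpt : (fun y : ℝ × ℝ => (‖Cμ * hFun cμ y.1 * hFun cμ y.2‖₊ : ℝ≥0∞) ^ β)
        = fun y : ℝ × ℝ => (‖Cμ‖₊ : ℝ≥0∞) ^ β *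
            ((‖hFun cμ y.1‖₊ : ℝ≥0∞) ^ β * (‖hFun cμ y.2‖₊ : ℝ≥0∞) ^ β) := by
      funext y
      rw [nnnorm_mul, nnnorm_mul, ENNReal.coe_mul, ENNReal.coe_mul,
        ENNReal.mul_rpow_of_nonneg _ _ hβ0', ENNReal.mul_rpow_of_nonneg _ _ hβ0', mul_assoc]
    have hmul : Measurable fun y : ℝ × ℝ =>
        (‖hFun cμ y.1‖₊ : ℝ≥0∞) ^ β * (‖hFun cμ y.2‖₊ : ℝ≥0∞) ^ β :=
      (hFmeas.comp measurable_fst).mul (hFmeas.comp measurable_snd)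
    rw [hpt, lintegral_const_mul _ hmul]
    have hsplit : ∫⁻ y : ℝ × ℝ, (‖hFun cμ y.1‖₊ : ℝ≥0∞) ^ β * (‖hFun cμ y.2‖₊ : ℝ≥0∞) ^ β
        = (∫⁻ t : ℝ, (‖hFun cμ t‖₊ : ℝ≥0∞) ^ β) * ∫⁻ t : ℝ, (‖hFun cμ t‖₊ : ℝ≥0∞) ^ β := by
      rw [Measure.volume_eq_prod]
      exact lintegral_prod_mul hFmeas.aemeasurable hFmeas.aemeasurable
    rw [hsplit]
    have hlt := lintegral_hFun_lt_top hcμ hβ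
    have hC : (‖Cμ‖₊ : ℝ≥0∞) ^ β < ⊤ :=
      ENNReal.rpow_lt_top_of_nonneg hβ0' ENNReal.coe_ne_top
    exact (ENNReal.mul_lt_top hC (ENNReal.mul_lt_top hlt hlt)).ne
end

section
/- For every c > 0 and every x ∈ ℝ, sup_{u > 0} u^{−1} ∫_{x−u/2}^{x+u/2} exp(−c|y|) dy ≤ min(1, 2/(c|x|)) (with the convention that the right-hand side equals 1 when x = 0). -/
open MeasureTheory Filter Set Topology

lemma integrable_exp_neg_abs' {c : ℝ} (hc : 0 < c) :
    Integrable (fun y : ℝ => Real.exp (-c * |y|)) := by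
  have hIoi : IntegrableOn (fun y : ℝ => Real.exp (-c * |y|)) (Ioi 0) := by
    refine (exp_neg_integrableOn_Ioi 0 hc).congr_fun ?_ measurableSet_Ioi
    intro y hy
    simp [abs_of_pos (mem_Ioi.mp hy)]
  have hIic : IntegrableOn (fun y : ℝ => Real.exp (-c * |y|)) (Iic 0) := by
    rw [← Measure.map_neg_eq_self (volume : Measure ℝ)]
    let m : MeasurableEmbedding fun x : ℝ => -x := (Homeomorph.neg ℝ).measurableEmbedding
    rw [m.integrableOn_map_iff]
    simp_rw [Function.comp_def, abs_neg, neg_preimage, neg_Iic, neg_zero]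
    exact Iff.mpr integrableOn_Ici_iff_integrableOn_Ioi hIoi
  have := hIic.union hIoi
  rwa [Iic_union_Ioi, integrableOn_univ] at this

lemma integral_exp_neg_abs' {c : ℝ} (hc : 0 < c) :
    ∫ y : ℝ, Real.exp (-c * |y|) = 2 / c := by
  have h1 : ∫ y : ℝ, Real.exp (-c * |y|) = 2 * ∫ y in Ioi (0:ℝ), Real.exp (-c * y) :=
    integral_comp_abs (f := fun y => Real.exp (-c * y))
  have h2 : ∫ y in Ioi (0:ℝ), Real.exp (-c * y) = c⁻¹ := by
    have := integral_comp_mul_left_Ioi (fun y => Real.exp (-y)) 0 hc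
    simp only [mul_zero, integral_exp_neg_Ioi, neg_zero, Real.exp_zero, smul_eq_mul,
      mul_one] at this
    simpa only [neg_mul] using this
  rw [h1, h2]
  ring

/-- For every `c > 0` and `x ∈ ℝ`,
`sup_{u > 0} u⁻¹ ∫_{x-u/2}^{x+u/2} e^{-c|y|} dy ≤ min(1, 2/(c|x|))`
(with the right-hand side interpreted as `1` when `x = 0`). -/
theorem average_exp_window_bound (c : ℝ) (hc : 0 < c) (x : ℝ) :
    ∀ u > (0 : ℝ),
      u⁻¹ * ∫ y in Icc (x - u / 2) (x + u / 2), Real.exp (-c * |y|) ≤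
        if x = 0 then 1 else min 1 (2 / (c * |x|)) := by
  intro u hu
  set a := x - u / 2 with ha
  set b := x + u / 2 with hb
  have hab : a ≤ b := by rw [ha, hb]; linarith
  have hcont : Continuous (fun y : ℝ => Real.exp (-c * |y|)) :=
    Real.continuous_exp.comp (continuous_const.mul continuous_abs)
  have hint : IntegrableOn (fun y : ℝ => Real.exp (-c * |y|)) (Icc a b) :=
    hcont.integrableOn_Icc
  have hvol : (volume (Icc a b)).toReal = u := by
    rw [Real.volume_Icc, ENNReal.toReal_ofReal (by linarith : (0:ℝ) ≤ b - a), ha, hb]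
    ring
  -- Bound 1: average ≤ 1
  have bound1 : u⁻¹ * ∫ y in Icc a b, Real.exp (-c * |y|) ≤ 1 := by
    have hconst : IntegrableOn (fun _ : ℝ => (1:ℝ)) (Icc a b) :=
      integrableOn_const (by rw [Real.volume_Icc]; exact ENNReal.ofReal_ne_top)
    have h1 : ∫ y in Icc a b, Real.exp (-c * |y|) ≤ ∫ _ in Icc a b, (1:ℝ) := by
      refine setIntegral_mono_on hint hconst measurableSet_Icc fun y _ => ?_
      exact Real.exp_le_one_iff.2 (by nlinarith [abs_nonneg y])
    have h2 : ∫ _ in Icc a b, (1:ℝ) = u := by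
      rw [setIntegral_const, measureReal_def, hvol, smul_eq_mul, mul_one]
    calc u⁻¹ * ∫ y in Icc a b, Real.exp (-c * |y|) ≤ u⁻¹ * u := by
          rw [h2] at h1
          exact mul_le_mul_of_nonneg_left h1 (by positivity)
      _ = 1 := inv_mul_cancel₀ hu.ne'
  by_cases hx : x = 0
  · simpa [hx] using bound1
  · have hxpos : 0 < |x| := abs_pos.2 hx
    simp only [hx, if_false, le_min_iff]
    refine ⟨bound1, ?_⟩
    by_cases huge : |x| ≤ u
    · -- large window: compare with full-line integral
      have h1 : ∫ y in Icc a b, Real.exp (-c * |y|) ≤ ∫ y : ℝ, Real.exp (-c * |y|) :=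
        setIntegral_le_integral (integrable_exp_neg_abs' hc)
          (Eventually.of_forall fun y => (Real.exp_pos _).le)
      rw [integral_exp_neg_abs' hc] at h1
      calc u⁻¹ * ∫ y in Icc a b, Real.exp (-c * |y|) ≤ u⁻¹ * (2 / c) :=
            mul_le_mul_of_nonneg_left h1 (by positivity)
        _ ≤ |x|⁻¹ * (2 / c) :=
            mul_le_mul_of_nonneg_right (inv_anti₀ hxpos huge) (by positivity)
        _ = 2 / (c * |x|) := by field_simp
    · -- small window: |y| ≥ |x|/2 on the window
      push_neg at huge
      have hptw : ∀ y ∈ Icc a b, Real.exp (-c * |y|) ≤ Real.exp (-c * (|x| / 2)) := by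
        intro y hy
        apply Real.exp_le_exp.2
        have hy1 : x - u / 2 ≤ y := by simpa [ha] using hy.1
        have hy2 : y ≤ x + u / 2 := by simpa [hb] using hy.2
        have h1 : |y - x| ≤ u / 2 := by
          rw [abs_le]; constructor <;> linarith
        have h2 : |x| - |y| ≤ u / 2 := by
          have := abs_sub_abs_le_abs_sub x y
          rw [abs_sub_comm] at this
          linarith
        nlinarith
      have h1 : ∫ y in Icc a b, Real.exp (-c * |y|) ≤ u * Real.exp (-c * (|x| / 2)) := by
        have := setIntegral_mono_on hint (integrableOn_const (by
          rw [Real.volume_Icc]; exact ENNReal.ofReal_ne_top)) measurableSet_Icc hptw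
        rwa [setIntegral_const, measureReal_def, hvol, smul_eq_mul] at this
      have hexp : Real.exp (-c * (|x| / 2)) ≤ 2 / (c * |x|) := by
        have ht : 0 < c * (|x| / 2) := by positivity
        have hle : c * (|x| / 2) ≤ Real.exp (c * (|x| / 2)) :=
          (Real.add_one_le_exp _).trans' (by linarith)
        rw [neg_mul, Real.exp_neg]
        calc (Real.exp (c * (|x| / 2)))⁻¹ ≤ (c * (|x| / 2))⁻¹ :=
              inv_anti₀ ht hle
          _ = 2 / (c * |x|) := by field_simp
      calc u⁻¹ * ∫ y in Icc a b, Real.exp (-c * |y|)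
          ≤ u⁻¹ * (u * Real.exp (-c * (|x| / 2))) :=
            mul_le_mul_of_nonneg_left h1 (by positivity)
        _ = Real.exp (-c * (|x| / 2)) := by field_simp
        _ ≤ 2 / (c * |x|) := hexp
end

section
/- Let γ ∈ (1,2) and let f : ℝ² → ℝ be measurable with f ∈ L^γ(ℝ²). Define d_γ = ∫_0^∞ (exp(iu) − 1 − iu) u^{−γ−1} du ∈ ℂ (an absolutely convergent integral). Then ∫_{ℝ²} ∫_0^∞ Ψ(u f(x)) u^{−γ−1} du dx = d_γ ‖f₊‖_γ^γ + conj(d_γ) ‖f₋‖_γ^γ, where f₊ = max(f, 0), f₋ = −min(f, 0), ‖·‖_γ is the L^γ(ℝ²) norm, and conj denotes complex conjugation; moreover the double integral on the left-hand side is absolutely convergent. -/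
open MeasureTheory Filter Set Topology

/-- `Ψ(v) = exp(iv) - 1 - iv`. -/
noncomputable def Psi (v : ℝ) : ℂ := Complex.exp (v * Complex.I) - 1 - v * Complex.I

lemma psi_cont : Continuous Psi := by unfold Psi; continuity

lemma psi_neg (v : ℝ) : Psi (-v) = (starRingEnd ℂ) (Psi v) := by
  simp only [Psi, map_sub, ← Complex.exp_conj, map_mul, Complex.conj_I, Complex.conj_ofReal,
    map_one, Complex.ofReal_neg]
  ring_nf

lemma psi_zero : Psi 0 = 0 := by simp [Psi]

lemma psi_small {v : ℝ} (hv : |v| ≤ 1) : ‖Psi v‖ ≤ v ^ 2 := by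
  have h := Complex.norm_exp_sub_one_sub_id_le (x := v * Complex.I) (by
    simpa [Complex.norm_real] using hv)
  simpa [Psi, Complex.norm_real, sq_abs, abs_mul, Complex.norm_I] using h

lemma psi_large (v : ℝ) : ‖Psi v‖ ≤ 2 + |v| := by
  calc ‖Psi v‖ ≤ ‖Complex.exp (v * Complex.I) - 1‖ + ‖(v : ℂ) * Complex.I‖ := norm_sub_le _ _
  _ ≤ (‖Complex.exp (v * Complex.I)‖ + ‖(1 : ℂ)‖) + |v| := by
      gcongr
      · exact norm_sub_le _ _
      · simp [Complex.norm_real]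
  _ = 2 + |v| := by
      rw [Complex.norm_exp_ofReal_mul_I]; norm_num

lemma integrable_conj' {α} [MeasurableSpace α] {μ : Measure α} {f : α → ℂ}
    (h : Integrable f μ) : Integrable (fun x => (starRingEnd ℂ) (f x)) μ :=
  h.norm.mono' ((Complex.conjLIE.continuous.comp_aestronglyMeasurable h.1))
    (Filter.Eventually.of_forall fun x => by simp)

lemma psi_meas (γ : ℝ) : Measurable (fun u : ℝ => Psi u * ((u ^ (-γ - 1) : ℝ) : ℂ)) := by
  have h1 : Measurable fun u : ℝ => u ^ (-γ - 1 : ℝ) := by fun_prop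
  exact (psi_cont.measurable).mul (Complex.measurable_ofReal.comp h1)

lemma base_int (γ : ℝ) (hγ : γ ∈ Set.Ioo (1:ℝ) 2) :
    IntegrableOn (fun u : ℝ => Psi u * ((u ^ (-γ - 1) : ℝ) : ℂ)) (Set.Ioi 0) := by
  have hmeas : AEStronglyMeasurable (fun u : ℝ => Psi u * ((u ^ (-γ - 1) : ℝ) : ℂ)) (volume : Measure ℝ) := (psi_meas γ).aestronglyMeasurable
  have h01 : IntegrableOn (fun u : ℝ => Psi u * ((u ^ (-γ - 1) : ℝ) : ℂ)) (Set.Ioc 0 1) := by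
    have hg : IntegrableOn (fun u : ℝ => u ^ (1 - γ : ℝ)) (Set.Ioc 0 1) := by
      rw [← intervalIntegrable_iff_integrableOn_Ioc_of_le zero_le_one]
      exact intervalIntegral.intervalIntegrable_rpow' (by linarith [hγ.2])
    refine Integrable.mono' hg hmeas.restrict ?_
    rw [ae_restrict_iff' measurableSet_Ioc]
    refine Filter.Eventually.of_forall fun u hu => ?_
    rcases hu with ⟨hu0, hu1⟩
    have habs : |u| ≤ 1 := by rw [abs_of_pos hu0]; exact hu1
    calc ‖Psi u * ((u ^ (-γ - 1) : ℝ) : ℂ)‖ = ‖Psi u‖ * |u ^ (-γ - 1 : ℝ)| := by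
          rw [norm_mul, Complex.norm_real, Real.norm_eq_abs]
      _ ≤ u ^ 2 * u ^ (-γ - 1 : ℝ) := by
          rw [_root_.abs_of_nonneg (Real.rpow_nonneg hu0.le _)]
          exact mul_le_mul_of_nonneg_right (psi_small habs) (Real.rpow_nonneg hu0.le _)
      _ = u ^ (1 - γ : ℝ) := by
          rw [← Real.rpow_natCast u 2, ← Real.rpow_add hu0]
          congr 1
          push_cast
          ring
  have h1inf : IntegrableOn (fun u : ℝ => Psi u * ((u ^ (-γ - 1) : ℝ) : ℂ)) (Set.Ioi 1) := by
    have hg : IntegrableOn (fun u : ℝ => 3 * u ^ (-γ : ℝ)) (Set.Ioi 1) :=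
      (integrableOn_Ioi_rpow_of_lt (by linarith [hγ.1]) one_pos).const_mul 3
    refine Integrable.mono' hg hmeas.restrict ?_
    rw [ae_restrict_iff' measurableSet_Ioi]
    refine Filter.Eventually.of_forall fun u hu => ?_
    have hu1 : (1:ℝ) < u := hu
    have hu0 : (0:ℝ) < u := lt_trans one_pos hu1
    calc ‖Psi u * ((u ^ (-γ - 1) : ℝ) : ℂ)‖ = ‖Psi u‖ * |u ^ (-γ - 1 : ℝ)| := by
          rw [norm_mul, Complex.norm_real, Real.norm_eq_abs]
      _ ≤ (3 * u) * u ^ (-γ - 1 : ℝ) := by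
          rw [_root_.abs_of_nonneg (Real.rpow_nonneg hu0.le _)]
          refine mul_le_mul_of_nonneg_right ((psi_large u).trans ?_) (Real.rpow_nonneg hu0.le _)
          rw [abs_of_pos hu0]; linarith
      _ = 3 * u ^ (-γ : ℝ) := by
          rw [show (-γ : ℝ) = 1 + (-γ - 1) by ring, Real.rpow_add hu0, Real.rpow_one]
          ring
  have : Set.Ioc (0:ℝ) 1 ∪ Set.Ioi 1 = Set.Ioi 0 := Set.Ioc_union_Ioi_eq_Ioi zero_le_one
  rw [← this]
  exact h01.union h1inf

lemma scale {E : Type*} [NormedAddCommGroup E] [NormedSpace ℝ E]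
    (γ : ℝ) (g : ℝ → E)
    (hg : IntegrableOn (fun v => (v ^ (-γ - 1 : ℝ) : ℝ) • g v) (Set.Ioi 0))
    {t : ℝ} (ht : 0 < t) :
    IntegrableOn (fun u => (u ^ (-γ - 1 : ℝ) : ℝ) • g (t * u)) (Set.Ioi 0) ∧
    ∫ u in Set.Ioi (0:ℝ), (u ^ (-γ - 1 : ℝ) : ℝ) • g (t * u) =
      t ^ γ • ∫ v in Set.Ioi (0:ℝ), (v ^ (-γ - 1 : ℝ) : ℝ) • g v := by
  set H : ℝ → E := fun v => (v ^ (-γ - 1 : ℝ) : ℝ) • g v with hH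
  have key : Set.EqOn (fun u => (u ^ (-γ - 1 : ℝ) : ℝ) • g (t * u))
      (fun u => t ^ (γ + 1 : ℝ) • H (t * u)) (Set.Ioi 0) := by
    intro u hu
    have hu0 : (0:ℝ) < u := hu
    simp only [hH, smul_smul]
    congr 1
    rw [Real.mul_rpow ht.le hu0.le, ← mul_assoc, ← Real.rpow_add ht]
    norm_num
  have hcomp : IntegrableOn (fun u => H (t * u)) (Set.Ioi 0) := by
    rw [integrableOn_Ioi_comp_mul_left_iff H 0 ht, mul_zero]; exact hg
  constructor
  · have h2 : IntegrableOn (fun u => t ^ (γ + 1 : ℝ) • H (t * u)) (Set.Ioi 0) := hcomp.smul _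
    exact h2.congr_fun key.symm measurableSet_Ioi
  · rw [setIntegral_congr_fun measurableSet_Ioi key, integral_smul,
      integral_comp_mul_left_Ioi H 0 ht, mul_zero, smul_smul]
    congr 1
    rw [Real.rpow_add ht, Real.rpow_one, mul_assoc, mul_inv_cancel₀ ht.ne', mul_one]

lemma smul_form (γ t : ℝ) :
    (fun u : ℝ => Psi (u * t) * ((u ^ (-γ - 1) : ℝ) : ℂ))
      = fun u : ℝ => (u ^ (-γ - 1 : ℝ) : ℝ) • Psi (t * u) := by
  funext u; rw [mul_comm u t, Complex.real_smul, mul_comm]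

lemma smul_form' (γ : ℝ) :
    (fun u : ℝ => Psi u * ((u ^ (-γ - 1) : ℝ) : ℂ))
      = fun u : ℝ => (u ^ (-γ - 1 : ℝ) : ℝ) • Psi u := by
  funext u; rw [Complex.real_smul, mul_comm]

lemma inner_eq (γ : ℝ) (hγ : γ ∈ Set.Ioo (1:ℝ) 2) (t : ℝ) :
    IntegrableOn (fun u : ℝ => Psi (u * t) * ((u ^ (-γ - 1) : ℝ) : ℂ)) (Set.Ioi 0) ∧
    ∫ u in Set.Ioi (0:ℝ), Psi (u * t) * ((u ^ (-γ - 1) : ℝ) : ℂ) =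
      (max t 0 ^ γ : ℝ) • (∫ u in Set.Ioi (0:ℝ), Psi u * ((u ^ (-γ - 1) : ℝ) : ℂ)) +
      (max (-t) 0 ^ γ : ℝ) •
        (starRingEnd ℂ) (∫ u in Set.Ioi (0:ℝ), Psi u * ((u ^ (-γ - 1) : ℝ) : ℂ)) := by
  have hγ0 : γ ≠ 0 := by have := hγ.1; intro h; rw [h] at this; linarith
  have hbase := base_int γ hγ
  have hbaseS : IntegrableOn (fun v : ℝ => (v ^ (-γ - 1 : ℝ) : ℝ) • Psi v) (Set.Ioi 0) := by
    rw [← smul_form' γ]; exact hbase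
  rcases lt_trichotomy t 0 with hneg | rfl | hpos
  · have hpos' : 0 < -t := neg_pos.mpr hneg
    have IH := scale γ Psi hbaseS hpos'
    have hconjfun : (fun u : ℝ => Psi (u * t) * ((u ^ (-γ - 1) : ℝ) : ℂ))
        = fun u : ℝ => (starRingEnd ℂ) (Psi (u * -t) * ((u ^ (-γ - 1) : ℝ) : ℂ)) := by
      funext u
      rw [map_mul, Complex.conj_ofReal, ← psi_neg, show -(u * -t) = u * t by ring]
    have hIntNeg : IntegrableOn (fun u : ℝ => Psi (u * -t) * ((u ^ (-γ - 1) : ℝ) : ℂ))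
        (Set.Ioi 0) := by rw [smul_form γ (-t)]; exact IH.1
    constructor
    · rw [hconjfun]; exact integrable_conj' hIntNeg
    · rw [hconjfun, integral_conj]
      rw [show (fun u : ℝ => Psi (u * -t) * ((u ^ (-γ - 1) : ℝ) : ℂ))
          = fun u : ℝ => (u ^ (-γ - 1 : ℝ) : ℝ) • Psi (-t * u) from smul_form γ (-t), IH.2]
      rw [max_eq_right hneg.le, max_eq_left hpos'.le, Real.zero_rpow hγ0, zero_smul, zero_add,
        ← smul_form' γ]
      simp [Complex.real_smul, map_mul, Complex.conj_ofReal]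
  · simp only [mul_zero, psi_zero, zero_mul, neg_zero, max_self, Real.zero_rpow hγ0, zero_smul,
      add_zero]
    exact ⟨integrableOn_zero, by simp⟩
  · have IH := scale γ Psi hbaseS hpos
    rw [smul_form γ t, smul_form' γ]
    refine ⟨IH.1, ?_⟩
    rw [IH.2, max_eq_left hpos.le, max_eq_right (neg_nonpos.mpr hpos.le), Real.zero_rpow hγ0,
      zero_smul, add_zero]

lemma psi_norm_mul_abs (u t : ℝ) : ‖Psi (u * t)‖ = ‖Psi (|t| * u)‖ := by
  rcases abs_choice t with h | h
  · rw [h, mul_comm]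
  · rw [h, show u * t = -(-t * u) by ring, psi_neg]
    simp

lemma norm_base (γ : ℝ) (hγ : γ ∈ Set.Ioo (1:ℝ) 2) :
    IntegrableOn (fun v : ℝ => (v ^ (-γ - 1 : ℝ) : ℝ) • ‖Psi v‖) (Set.Ioi 0) := by
  refine MeasureTheory.IntegrableOn.congr_fun (s := Set.Ioi 0) ((base_int γ hγ).norm) ?_ measurableSet_Ioi
  intro v hv
  have hv0 : (0:ℝ) < v := hv
  show ‖Psi v * ((v ^ (-γ - 1) : ℝ) : ℂ)‖ = (v ^ (-γ - 1 : ℝ) : ℝ) • ‖Psi v‖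
  rw [norm_mul, Complex.norm_real, Real.norm_eq_abs, _root_.abs_of_nonneg (Real.rpow_nonneg hv0.le _),
    smul_eq_mul, mul_comm]

lemma norm_int_eq (γ : ℝ) (hγ : γ ∈ Set.Ioo (1:ℝ) 2) (t : ℝ) :
    (∫ u in Set.Ioi (0:ℝ), ‖Psi (u * t) * ((u ^ (-γ - 1) : ℝ) : ℂ)‖) =
      |t| ^ γ * ∫ u in Set.Ioi (0:ℝ), ‖Psi u * ((u ^ (-γ - 1) : ℝ) : ℂ)‖ := by
  have hγ0 : γ ≠ 0 := by have := hγ.1; intro h; rw [h] at this; linarith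
  rcases eq_or_ne t 0 with rfl | ht
  · simp [psi_zero, Real.zero_rpow hγ0]
  · have habs : (0:ℝ) < |t| := abs_pos.mpr ht
    have IH := scale γ (fun v => ‖Psi v‖) (norm_base γ hγ) habs
    have h1 : (∫ u in Set.Ioi (0:ℝ), ‖Psi (u * t) * ((u ^ (-γ - 1) : ℝ) : ℂ)‖) =
        ∫ u in Set.Ioi (0:ℝ), (u ^ (-γ - 1 : ℝ) : ℝ) • ‖Psi (|t| * u)‖ := by
      refine setIntegral_congr_fun measurableSet_Ioi fun u hu => ?_
      have hu0 : (0:ℝ) < u := hu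
      rw [norm_mul, Complex.norm_real, Real.norm_eq_abs,
        _root_.abs_of_nonneg (Real.rpow_nonneg hu0.le _), psi_norm_mul_abs, smul_eq_mul, mul_comm]
    have h2 : (∫ u in Set.Ioi (0:ℝ), ‖Psi u * ((u ^ (-γ - 1) : ℝ) : ℂ)‖) =
        ∫ v in Set.Ioi (0:ℝ), (v ^ (-γ - 1 : ℝ) : ℝ) • ‖Psi v‖ := by
      refine setIntegral_congr_fun measurableSet_Ioi fun v hv => ?_
      have hv0 : (0:ℝ) < v := hv
      rw [norm_mul, Complex.norm_real, Real.norm_eq_abs,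
        _root_.abs_of_nonneg (Real.rpow_nonneg hv0.le _), smul_eq_mul, mul_comm]
    rw [h1, h2, IH.2, smul_eq_mul]

lemma norm_int_integrableOn (γ : ℝ) (hγ : γ ∈ Set.Ioo (1:ℝ) 2) (t : ℝ) :
    IntegrableOn (fun u : ℝ => ‖Psi (u * t) * ((u ^ (-γ - 1) : ℝ) : ℂ)‖) (Set.Ioi 0) :=
  ((inner_eq γ hγ t).1).norm

/-- For `f ∈ L^γ(ℝ²)` with `γ ∈ (1,2)`,
`∫_{ℝ²} ∫_0^∞ Ψ(u f(x)) u^{-γ-1} du dx = d_γ ‖f₊‖_γ^γ + conj(d_γ) ‖f₋‖_γ^γ`,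
where `d_γ = ∫_0^∞ Ψ(u) u^{-γ-1} du`; all integrals converge absolutely. -/
theorem Psi_integral_stable_form
    (γ : ℝ) (hγ : γ ∈ Ioo (1 : ℝ) 2)
    (f : ℝ × ℝ → ℝ) (hfm : Measurable f)
    (hfLp : MemLp f (ENNReal.ofReal γ) volume) :
    IntegrableOn (fun u : ℝ => Psi u * ((u ^ (-γ - 1) : ℝ) : ℂ)) (Ioi 0) ∧
    IntegrableOn
      (fun p : (ℝ × ℝ) × ℝ => Psi (p.2 * f p.1) * ((p.2 ^ (-γ - 1) : ℝ) : ℂ))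
      ((univ : Set (ℝ × ℝ)) ×ˢ Ioi (0 : ℝ)) ∧
    (∫ x : ℝ × ℝ, ∫ u in Ioi (0 : ℝ), Psi (u * f x) * ((u ^ (-γ - 1) : ℝ) : ℂ)) =
      (∫ u in Ioi (0 : ℝ), Psi u * ((u ^ (-γ - 1) : ℝ) : ℂ)) *
          ((∫ x : ℝ × ℝ, max (f x) 0 ^ γ : ℝ) : ℂ) +
        (starRingEnd ℂ) (∫ u in Ioi (0 : ℝ), Psi u * ((u ^ (-γ - 1) : ℝ) : ℂ)) *
          ((∫ x : ℝ × ℝ, max (-f x) 0 ^ γ : ℝ) : ℂ) := by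
  have hγ1 := hγ.1
  have hγ2 := hγ.2
  have hγpos : (0:ℝ) < γ := by linarith
  -- integrability of |f|^γ
  have habs : Integrable (fun x => |f x| ^ γ) volume := by
    have h0 : (ENNReal.ofReal γ) ≠ 0 := by
      simp only [ne_eq, ENNReal.ofReal_eq_zero, not_le]; exact hγpos
    have := hfLp.integrable_norm_rpow h0 ENNReal.ofReal_ne_top
    simpa [Real.norm_eq_abs, ENNReal.toReal_ofReal hγpos.le] using this
  have hplus : Integrable (fun x => max (f x) 0 ^ γ) volume := by
    refine habs.mono' ?_ (Filter.Eventually.of_forall fun x => ?_)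
    · exact ((by fun_prop : Measurable fun x => max (f x) 0 ^ γ)).aestronglyMeasurable
    · rw [Real.norm_eq_abs, _root_.abs_of_nonneg (Real.rpow_nonneg (le_max_right _ _) _)]
      exact Real.rpow_le_rpow (le_max_right _ _)
        (max_le (le_abs_self _) (abs_nonneg _)) hγpos.le
  have hminus : Integrable (fun x => max (-f x) 0 ^ γ) volume := by
    refine habs.mono' ?_ (Filter.Eventually.of_forall fun x => ?_)
    · exact ((by fun_prop : Measurable fun x => max (-f x) 0 ^ γ)).aestronglyMeasurable
    · rw [Real.norm_eq_abs, _root_.abs_of_nonneg (Real.rpow_nonneg (le_max_right _ _) _)]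
      exact Real.rpow_le_rpow (le_max_right _ _)
        (max_le (neg_le_abs _) (abs_nonneg _)) hγpos.le
  refine ⟨base_int γ hγ, ?_, ?_⟩
  · -- joint integrability
    have hres : (volume : Measure ((ℝ × ℝ) × ℝ)).restrict ((univ : Set (ℝ × ℝ)) ×ˢ Ioi 0)
        = (volume : Measure (ℝ × ℝ)).prod ((volume : Measure ℝ).restrict (Ioi 0)) := by
      rw [Measure.volume_eq_prod, ← Measure.prod_restrict, Measure.restrict_univ]
    have hFm : AEStronglyMeasurable
        (fun p : (ℝ × ℝ) × ℝ => Psi (p.2 * f p.1) * ((p.2 ^ (-γ - 1) : ℝ) : ℂ))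
        ((volume : Measure (ℝ × ℝ)).prod ((volume : Measure ℝ).restrict (Ioi 0))) := by
      refine Measurable.aestronglyMeasurable ?_
      refine Measurable.mul ?_ ?_
      · exact psi_cont.measurable.comp (measurable_snd.mul (hfm.comp measurable_fst))
      · exact Complex.measurable_ofReal.comp (by fun_prop)
    rw [IntegrableOn, hres, integrable_prod_iff hFm]
    constructor
    · exact Filter.Eventually.of_forall fun x => (inner_eq γ hγ (f x)).1
    · have heq : (fun x : ℝ × ℝ =>
          ∫ u in Ioi (0:ℝ), ‖Psi (u * f x) * ((u ^ (-γ - 1) : ℝ) : ℂ)‖)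
          = fun x : ℝ × ℝ => |f x| ^ γ *
            ∫ u in Ioi (0:ℝ), ‖Psi u * ((u ^ (-γ - 1) : ℝ) : ℂ)‖ :=
        funext fun x => norm_int_eq γ hγ (f x)
      have : Integrable (fun x : ℝ × ℝ => |f x| ^ γ *
          ∫ u in Ioi (0:ℝ), ‖Psi u * ((u ^ (-γ - 1) : ℝ) : ℂ)‖) volume :=
        habs.mul_const _
      exact heq ▸ this
  · -- the identity
    have hint : ∀ x : ℝ × ℝ,
        (∫ u in Ioi (0:ℝ), Psi (u * f x) * ((u ^ (-γ - 1) : ℝ) : ℂ)) =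
        (max (f x) 0 ^ γ : ℝ) • (∫ u in Ioi (0:ℝ), Psi u * ((u ^ (-γ - 1) : ℝ) : ℂ)) +
        (max (-f x) 0 ^ γ : ℝ) •
          (starRingEnd ℂ) (∫ u in Ioi (0:ℝ), Psi u * ((u ^ (-γ - 1) : ℝ) : ℂ)) :=
      fun x => (inner_eq γ hγ (f x)).2
    simp only [hint]
    rw [integral_add (hplus.smul_const _) (hminus.smul_const _),
      integral_smul_const, integral_smul_const, Complex.real_smul, Complex.real_smul]
    ring
end
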